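/- Let σ > 0, n ≥ 1, and 0 ≤ P < σ². Then the total variation distance between the n-fold product of the centered Gaussian measure of variance σ² and the n-fold product of the centered Gaussian measure of variance σ² + P satisfies TV( N(0,σ²)^⊗n , N(0,σ²+P)^⊗n ) ≤ (P/(2σ²))·√(n/2). -/

import Mathlib

open MeasureTheory ProbabilityTheory Real
open scoped ENNReal NNReal

/-- The total variation distance between two measures: the supremum over
measurable sets `A` of `|P(A) − Q(A)|`. -/
noncomputable def tvDist {α : Type*} [MeasurableSpace α] (P Q : Measure α) : ℝ :=
  ⨆ A : {s : Set α // MeasurableSet s}, |(P A.1).toReal - (Q A.1).toReal|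

lemma my_lintegral_pi_prod {n : ℕ} (μ : Measure ℝ) [SigmaFinite μ]
    (f : Fin n → ℝ → ℝ≥0∞) (hf : ∀ i, Measurable (f i)) :
    ∫⁻ x : Fin n → ℝ, ∏ i, f i (x i) ∂(Measure.pi fun _ => μ) = ∏ i, ∫⁻ x, f i x ∂μ := by
  induction n with
  | zero => simp
  | succ n ih =>
      have h := (measurePreserving_piFinSuccAbove (fun _ : Fin (n+1) => μ) 0).symm
      rw [← h.lintegral_comp_emb (MeasurableEquiv.symm _).measurableEmbedding]
      simp_rw [MeasurableEquiv.piFinSuccAbove_symm_apply, Fin.insertNthEquiv,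
        Fin.prod_univ_succ, Fin.insertNth_zero]
      simp only [Fin.zero_succAbove, Equiv.coe_fn_mk, Fin.cons_zero, Fin.cons_succ, cast_eq]
      have hg : Measurable fun y : Fin n → ℝ => ∏ i, f i.succ (y i) :=
        Finset.measurable_prod _ fun i _ => (hf i.succ).comp (measurable_pi_apply i)
      rw [lintegral_prod_mul (hf 0).aemeasurable hg.aemeasurable,
        ih (fun i => f i.succ) (fun i => hf i.succ)]

lemma my_prod_rpow {ι : Type*} (s : Finset ι) (a : ι → ℝ≥0∞) {c : ℝ} (hc : 0 ≤ c) :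
    (∏ i ∈ s, a i) ^ c = ∏ i ∈ s, a i ^ c := by
  induction s using Finset.cons_induction with
  | empty => simp [ENNReal.one_rpow]
  | cons i s hi ih =>
      rw [Finset.prod_cons, Finset.prod_cons, ENNReal.mul_rpow_of_nonneg _ _ hc, ih]

lemma my_one_side {α : Type*} [MeasurableSpace α] (μ : Measure α) [SFinite μ]
    (f g : α → ℝ≥0∞) (hf : Measurable f) (hg : Measurable g)
    (hf1 : ∫⁻ x, f x ∂μ = 1) (A : Set α) :
    (μ.withDensity f) A ≤ (μ.withDensity g) A + (1 - ∫⁻ x, min (f x) (g x) ∂μ) := by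
  set m := ∫⁻ x, min (f x) (g x) ∂μ with hm
  have hmeas : Measurable fun x => min (f x) (g x) := hf.min hg
  have hmle : m ≤ 1 := hf1 ▸ lintegral_mono fun x => min_le_left _ _
  have hsub : ∫⁻ x, (f x - min (f x) (g x)) ∂μ = 1 - m := by
    rw [lintegral_sub hmeas (hmle.trans_lt ENNReal.one_lt_top).ne
      (ae_of_all _ fun x => min_le_left _ _), hf1]
  calc (μ.withDensity f) A = ∫⁻ x in A, f x ∂μ := withDensity_apply' _ _
    _ ≤ ∫⁻ x in A, (min (f x) (g x) + (f x - min (f x) (g x))) ∂μ :=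
        lintegral_mono fun x => le_add_tsub
    _ = (∫⁻ x in A, min (f x) (g x) ∂μ) + ∫⁻ x in A, (f x - min (f x) (g x)) ∂μ :=
        lintegral_add_left hmeas _
    _ ≤ (∫⁻ x in A, g x ∂μ) + (1 - m) := by
        refine add_le_add (lintegral_mono fun x => min_le_right _ _) ?_
        rw [← hsub]
        exact setLIntegral_le_lintegral _ _
    _ = (μ.withDensity g) A + (1 - m) := by rw [withDensity_apply' _ _]

/-- Le Cam's inequality. -/
lemma my_leCam {α : Type*} [MeasurableSpace α] (μ : Measure α) [SFinite μ]
    (f g : α → ℝ≥0∞) (hf : Measurable f) (hg : Measurable g)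
    (hf1 : ∫⁻ x, f x ∂μ = 1) (hg1 : ∫⁻ x, g x ∂μ = 1) (A : Set α) :
    |((μ.withDensity f) A).toReal - ((μ.withDensity g) A).toReal| ≤
      Real.sqrt (1 - (∫⁻ x, (f x * g x) ^ (1/2 : ℝ) ∂μ).toReal ^ 2) := by
  set m := ∫⁻ x, min (f x) (g x) ∂μ with hm
  set M := ∫⁻ x, max (f x) (g x) ∂μ with hM
  set ρ := ∫⁻ x, (f x * g x) ^ (1/2 : ℝ) ∂μ with hρ
  have hmeas_min : Measurable fun x => min (f x) (g x) := hf.min hg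
  have hmeas_max : Measurable fun x => max (f x) (g x) := hf.max hg
  have hmle : m ≤ 1 := hf1 ▸ lintegral_mono fun x => min_le_left _ _
  have hmM : m + M = 2 := by
    rw [hm, hM, ← lintegral_add_left hmeas_min]
    simp_rw [min_add_max]
    rw [lintegral_add_left hf, hf1, hg1]
    norm_num
  have hMle : M ≤ 2 := by rw [← hmM]; exact le_add_self
  have hmtop : m ≠ ⊤ := (hmle.trans_lt ENNReal.one_lt_top).ne
  have hMtop : M ≠ ⊤ := (hMle.trans_lt (by norm_num)).ne
  -- Cauchy-Schwarz
  have hCS : ρ ≤ (m * M) ^ (1/2 : ℝ) := by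
    have hpq : (2 : ℝ).HolderConjugate 2 := Real.HolderConjugate.two_two
    have h := ENNReal.lintegral_mul_le_Lp_mul_Lq μ hpq
      ((hmeas_min.pow_const (1/2 : ℝ)).aemeasurable)
      ((hmeas_max.pow_const (1/2 : ℝ)).aemeasurable)
    have hhalf : ∀ y : ℝ≥0∞, (y ^ (1/2 : ℝ)) ^ (2 : ℝ) = y := fun y => by
      rw [← ENNReal.rpow_mul]
      norm_num
    simp only [Pi.mul_apply, hhalf] at h
    calc ρ = ∫⁻ x, (min (f x) (g x)) ^ (1/2:ℝ) * (max (f x) (g x)) ^ (1/2:ℝ) ∂μ := by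
          refine lintegral_congr fun x => ?_
          rw [← ENNReal.mul_rpow_of_nonneg _ _ (by norm_num : (0:ℝ) ≤ 1/2), min_mul_max]
      _ ≤ (∫⁻ x, min (f x) (g x) ∂μ) ^ (1/2:ℝ) * (∫⁻ x, max (f x) (g x) ∂μ) ^ (1/2:ℝ) := h
      _ = (m * M) ^ (1/2:ℝ) := by
          rw [ENNReal.mul_rpow_of_nonneg _ _ (by norm_num : (0:ℝ) ≤ 1/2)]
  have hρtop : ρ ≠ ⊤ := by
    refine (hCS.trans_lt ?_).ne
    exact ENNReal.rpow_lt_top_of_nonneg (by norm_num) (ENNReal.mul_ne_top hmtop hMtop)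
  -- to reals
  set mr := m.toReal with hmr
  set ρr := ρ.toReal with hρr
  have hmr1 : mr ≤ 1 := by
    rw [hmr, ← ENNReal.toReal_one]
    exact ENNReal.toReal_mono ENNReal.one_ne_top hmle
  have hmr0 : 0 ≤ mr := ENNReal.toReal_nonneg
  have hρr0 : 0 ≤ ρr := ENNReal.toReal_nonneg
  have hMr : M.toReal = 2 - mr := by
    have := congrArg ENNReal.toReal hmM
    rw [ENNReal.toReal_add hmtop hMtop] at this
    simp only [ENNReal.toReal_ofNat] at this
    linarith
  have hρrsq : ρr ^ 2 ≤ mr * (2 - mr) := by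
    have h1 : ρr ≤ ((m * M) ^ (1/2:ℝ)).toReal :=
      ENNReal.toReal_mono (ENNReal.rpow_ne_top_of_nonneg (by norm_num)
        (ENNReal.mul_ne_top hmtop hMtop)) hCS
    rw [← ENNReal.toReal_rpow, ENNReal.toReal_mul, hMr] at h1
    have h2 : ρr ^ 2 ≤ ((mr * (2 - mr)) ^ (1/2:ℝ)) ^ 2 := by
      apply pow_le_pow_left₀ hρr0 h1
    rwa [← Real.rpow_natCast ((mr * (2-mr)) ^ (1/2:ℝ)) 2, ← Real.rpow_mul
      (by nlinarith), (by norm_num : (1/2 : ℝ) * (2:ℕ) = 1), Real.rpow_one] at h2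
  have hkey : 1 - mr ≤ Real.sqrt (1 - ρr ^ 2) := by
    have h3 : (1 - mr) ^ 2 ≤ 1 - ρr ^ 2 := by nlinarith
    calc 1 - mr = Real.sqrt ((1 - mr) ^ 2) := (Real.sqrt_sq (by linarith)).symm
      _ ≤ Real.sqrt (1 - ρr ^ 2) := Real.sqrt_le_sqrt h3
  -- set bound
  have hfA_top : (μ.withDensity f) A ≠ ⊤ := by
    refine ne_top_of_le_ne_top ?_ (measure_mono (Set.subset_univ A))
    rw [withDensity_apply' _ _, Measure.restrict_univ, hf1]
    exact ENNReal.one_ne_top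
  have hgA_top : (μ.withDensity g) A ≠ ⊤ := by
    refine ne_top_of_le_ne_top ?_ (measure_mono (Set.subset_univ A))
    rw [withDensity_apply' _ _, Measure.restrict_univ, hg1]
    exact ENNReal.one_ne_top
  have h1m : (1 - m).toReal = 1 - mr := by
    rw [ENNReal.toReal_sub_of_le hmle ENNReal.one_ne_top, ENNReal.toReal_one]
  have hside1 : ((μ.withDensity f) A).toReal - ((μ.withDensity g) A).toReal ≤ 1 - mr := by
    have h := my_one_side μ f g hf hg hf1 A
    have h' := ENNReal.toReal_mono
      (by exact ENNReal.add_ne_top.mpr ⟨hgA_top, ENNReal.sub_ne_top ENNReal.one_ne_top⟩) h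
    rw [ENNReal.toReal_add hgA_top (ENNReal.sub_ne_top ENNReal.one_ne_top), h1m] at h'
    linarith
  have hside2 : ((μ.withDensity g) A).toReal - ((μ.withDensity f) A).toReal ≤ 1 - mr := by
    have h := my_one_side μ g f hg hf hg1 A
    simp_rw [min_comm (g _) (f _)] at h
    have h' := ENNReal.toReal_mono
      (by exact ENNReal.add_ne_top.mpr ⟨hfA_top, ENNReal.sub_ne_top ENNReal.one_ne_top⟩) h
    rw [ENNReal.toReal_add hfA_top (ENNReal.sub_ne_top ENNReal.one_ne_top), h1m] at h'
    linarith
  rw [abs_sub_le_iff]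
  exact ⟨hside1.trans hkey, hside2.trans hkey⟩

/-- The Hellinger affinity between two centered Gaussians. -/
lemma my_affinity (v w : ℝ≥0) (hv : v ≠ 0) (hw : w ≠ 0) :
    ∫⁻ x, (gaussianPDF 0 v x * gaussianPDF 0 w x) ^ (1/2 : ℝ) =
      ENNReal.ofReal (Real.sqrt (2 * Real.sqrt ((v:ℝ) * w) / ((v:ℝ) + w))) := by
  have hv' : (0:ℝ) < v := by exact_mod_cast zero_lt_iff.mpr hv
  have hw' : (0:ℝ) < w := by exact_mod_cast zero_lt_iff.mpr hw
  set b : ℝ := ((v:ℝ) + w) / (4 * ((v:ℝ) * w)) with hb_def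
  have hb : 0 < b := by positivity
  set c : ℝ := Real.sqrt ((Real.sqrt (2*π*(v:ℝ)))⁻¹ * (Real.sqrt (2*π*(w:ℝ)))⁻¹) with hc_def
  have hc0 : 0 ≤ c := Real.sqrt_nonneg _
  have step1 : ∀ x : ℝ, (gaussianPDF 0 v x * gaussianPDF 0 w x) ^ (1/2 : ℝ) =
      ENNReal.ofReal (c * rexp (-b * x^2)) := by
    intro x
    rw [gaussianPDF, gaussianPDF, ← ENNReal.ofReal_mul (gaussianPDFReal_nonneg _ _ _),
      ENNReal.ofReal_rpow_of_nonneg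
        (mul_nonneg (gaussianPDFReal_nonneg _ _ _) (gaussianPDFReal_nonneg _ _ _))
        (by norm_num : (0:ℝ) ≤ 1/2)]
    congr 1
    rw [← Real.sqrt_eq_rpow]
    unfold gaussianPDFReal
    simp only [sub_zero]
    rw [show ((Real.sqrt (2*π*(v:ℝ)))⁻¹ * rexp (-x^2 / (2*(v:ℝ)))) *
        ((Real.sqrt (2*π*(w:ℝ)))⁻¹ * rexp (-x^2 / (2*(w:ℝ)))) =
        ((Real.sqrt (2*π*(v:ℝ)))⁻¹ * (Real.sqrt (2*π*(w:ℝ)))⁻¹) *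
        (rexp (-x^2 / (2*(v:ℝ))) * rexp (-x^2 / (2*(w:ℝ)))) by ring,
      Real.sqrt_mul (by positivity), ← Real.exp_add, ← Real.exp_half]
    congr 2
    rw [hb_def]
    field_simp
    ring
  simp_rw [step1]
  rw [← ofReal_integral_eq_lintegral_ofReal
    ((integrable_exp_neg_mul_sq hb).const_mul c)
    (ae_of_all _ fun x => mul_nonneg hc0 (Real.exp_nonneg _))]
  rw [integral_const_mul, integral_gaussian]
  congr 1
  -- c * √(π/b) = √(2√(vw)/(v+w))
  rw [hc_def, ← Real.sqrt_mul (by positivity)]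
  congr 1
  have hs : Real.sqrt ((v:ℝ) * w) ^ 2 = (v:ℝ) * w := Real.sq_sqrt (by positivity)
  have hs0 : 0 < Real.sqrt ((v:ℝ) * w) := Real.sqrt_pos.mpr (by positivity)
  have hD : Real.sqrt (2*π*(v:ℝ)) * Real.sqrt (2*π*(w:ℝ)) = 2*π*Real.sqrt ((v:ℝ)*w) := by
    rw [← Real.sqrt_mul (by positivity),
      show (2*π*(v:ℝ)) * (2*π*(w:ℝ)) = (2*π)^2 * ((v:ℝ)*w) by ring,
      Real.sqrt_mul (by positivity), Real.sqrt_sq (by positivity)]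
  rw [← mul_inv, hD, hb_def]
  rw [← hs]
  set s := Real.sqrt ((v:ℝ) * w)
  have hvw : 0 < (v:ℝ) + w := by positivity
  rw [Real.sqrt_sq hs0.le]
  field_simp
  ring

lemma my_pi_gaussian (n : ℕ) (v : ℝ≥0) (hv : v ≠ 0) :
    Measure.pi (fun _ : Fin n => gaussianReal 0 v) =
      (Measure.pi fun _ : Fin n => (volume : Measure ℝ)).withDensity
        (fun x => ∏ i, gaussianPDF 0 v (x i)) := by
  refine Measure.pi_eq fun s hs => ?_
  rw [withDensity_apply _ (MeasurableSet.univ_pi hs),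
    ← lintegral_indicator (MeasurableSet.univ_pi hs) _]
  have hind : ∀ x : Fin n → ℝ,
      (Set.pi Set.univ s).indicator (fun x => ∏ i, gaussianPDF 0 v (x i)) x
      = ∏ i, (s i).indicator (gaussianPDF 0 v) (x i) := by
    intro x
    by_cases hx : x ∈ Set.pi Set.univ s
    · rw [Set.indicator_of_mem hx]
      exact Finset.prod_congr rfl fun i _ =>
        (Set.indicator_of_mem (hx i (Set.mem_univ i)) _).symm
    · rw [Set.indicator_of_notMem hx]
      rw [Set.mem_univ_pi] at hx
      push_neg at hx
      obtain ⟨i, hi⟩ := hx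
      exact (Finset.prod_eq_zero (Finset.mem_univ i) (Set.indicator_of_notMem hi _)).symm
  simp_rw [hind]
  rw [my_lintegral_pi_prod _ _ (fun i => (measurable_gaussianPDF 0 v).indicator (hs i))]
  refine Finset.prod_congr rfl fun i _ => ?_
  rw [lintegral_indicator (hs i) _]
  exact (gaussianReal_apply 0 hv (s i)).symm

set_option maxHeartbeats 1000000 in
theorem stmt_4 (σ P : ℝ) (hσ : 0 < σ) (n : ℕ) (hn : 1 ≤ n)
    (hP0 : 0 ≤ P) (hP : P < σ ^ 2) :
    tvDist (Measure.pi fun _ : Fin n => gaussianReal 0 (σ ^ 2).toNNReal)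
        (Measure.pi fun _ : Fin n => gaussianReal 0 (σ ^ 2 + P).toNNReal)
      ≤ (P / (2 * σ ^ 2)) * Real.sqrt (n / 2) := by
  have hσ2 : (0:ℝ) < σ ^ 2 := by positivity
  set v : ℝ≥0 := (σ ^ 2).toNNReal with hv_def
  set w : ℝ≥0 := (σ ^ 2 + P).toNNReal with hw_def
  have hvc : (v:ℝ) = σ ^ 2 := Real.coe_toNNReal _ hσ2.le
  have hwc : (w:ℝ) = σ ^ 2 + P := Real.coe_toNNReal _ (by linarith)
  have hv0 : v ≠ 0 := by
    simp only [hv_def, ne_eq, Real.toNNReal_eq_zero, not_le]; linarith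
  have hw0 : w ≠ 0 := by
    simp only [hw_def, ne_eq, Real.toNNReal_eq_zero, not_le]; linarith
  set p : ℝ → ℝ≥0∞ := gaussianPDF 0 v with hp_def
  set q : ℝ → ℝ≥0∞ := gaussianPDF 0 w with hq_def
  have hpm : Measurable p := measurable_gaussianPDF 0 v
  have hqm : Measurable q := measurable_gaussianPDF 0 w
  have hFm : Measurable fun x : Fin n → ℝ => ∏ i, p (x i) :=
    Finset.measurable_prod _ fun i _ => hpm.comp (measurable_pi_apply i)
  have hGm : Measurable fun x : Fin n → ℝ => ∏ i, q (x i) :=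
    Finset.measurable_prod _ fun i _ => hqm.comp (measurable_pi_apply i)
  have hF1 : ∫⁻ x : Fin n → ℝ, ∏ i, p (x i) ∂(Measure.pi fun _ => volume) = 1 := by
    rw [my_lintegral_pi_prod _ _ (fun _ => hpm)]
    simp [hp_def, lintegral_gaussianPDF_eq_one 0 hv0]
  have hG1 : ∫⁻ x : Fin n → ℝ, ∏ i, q (x i) ∂(Measure.pi fun _ => volume) = 1 := by
    rw [my_lintegral_pi_prod _ _ (fun _ => hqm)]
    simp [hq_def, lintegral_gaussianPDF_eq_one 0 hw0]
  set s0 : ℝ := Real.sqrt (2 * Real.sqrt ((v:ℝ) * w) / ((v:ℝ) + w)) with hs0_def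
  have hs0_nonneg : 0 ≤ s0 := Real.sqrt_nonneg _
  have hρ : ∫⁻ x : Fin n → ℝ, ((∏ i, p (x i)) * ∏ i, q (x i)) ^ (1/2:ℝ)
      ∂(Measure.pi fun _ => volume) = ENNReal.ofReal (s0 ^ n) := by
    have hpt : ∀ x : Fin n → ℝ, ((∏ i, p (x i)) * ∏ i, q (x i)) ^ (1/2:ℝ)
        = ∏ i, (p (x i) * q (x i)) ^ (1/2:ℝ) := fun x => by
      rw [← Finset.prod_mul_distrib, my_prod_rpow _ _ (by norm_num : (0:ℝ) ≤ 1/2)]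
    simp_rw [hpt]
    rw [my_lintegral_pi_prod _ (fun _ y => (p y * q y) ^ (1/2:ℝ)) (fun _ => (hpm.mul hqm).pow_const _)]
    simp_rw [hp_def, hq_def, my_affinity v w hv0 hw0]
    rw [Finset.prod_const, Finset.card_univ, Fintype.card_fin,
      ← ENNReal.ofReal_pow hs0_nonneg]
  simp only [tvDist]
  refine Real.iSup_le (fun A => ?_)
    (mul_nonneg (div_nonneg hP0 (by positivity)) (Real.sqrt_nonneg _))
  rw [my_pi_gaussian n v hv0, my_pi_gaussian n w hw0]
  refine le_trans (my_leCam _ _ _ hFm hGm hF1 hG1 A.1) ?_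
  rw [hρ, ENNReal.toReal_ofReal (by positivity)]
  -- numeric part
  set a : ℝ := 2 * Real.sqrt ((v:ℝ) * w) / ((v:ℝ) + w) with ha_def
  have ha0 : 0 ≤ a := by
    rw [ha_def]
    positivity
  have hs0sq : s0 ^ 2 = a := Real.sq_sqrt ha0
  have hWnn : (0:ℝ) ≤ σ ^ 2 + P := by linarith
  set sw : ℝ := Real.sqrt (σ ^ 2 + P) with hsw_def
  have hsw2 : sw ^ 2 = σ ^ 2 + P := Real.sq_sqrt hWnn
  have hswσ : σ ≤ sw := by
    have h := Real.sqrt_le_sqrt (show σ ^ 2 ≤ σ ^ 2 + P by linarith)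
    rwa [Real.sqrt_sq hσ.le] at h
  have hsvw : Real.sqrt ((v:ℝ) * w) = σ * sw := by
    rw [hvc, hwc, Real.sqrt_mul (by positivity), Real.sqrt_sq hσ.le]
  have ha_eq : a = 2 * σ * sw / (2 * σ ^ 2 + P) := by
    rw [ha_def, hsvw, hvc, hwc]; ring_nf
  have hd : sw - σ ≤ P / (2 * σ) := by
    rw [le_div_iff₀ (by positivity : (0:ℝ) < 2 * σ)]
    nlinarith [hsw2, hswσ, hσ]
  have hc1 : (sw - σ) ^ 2 ≤ P ^ 2 / (4 * σ ^ 2) := by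
    have h2 : (sw - σ) ^ 2 ≤ (P / (2 * σ)) ^ 2 := by
      have := sub_nonneg.mpr hswσ
      nlinarith
    calc (sw - σ) ^ 2 ≤ (P / (2 * σ)) ^ 2 := h2
      _ = P ^ 2 / (4 * σ ^ 2) := by rw [div_pow, mul_pow]; norm_num
  have heq : 1 - a = (sw - σ) ^ 2 / (2 * σ ^ 2 + P) := by
    rw [ha_eq]
    field_simp
    nlinarith [hsw2]
  have h1a : 1 - a ≤ P ^ 2 / (8 * σ ^ 4) := by
    rw [heq]
    calc (sw - σ) ^ 2 / (2 * σ ^ 2 + P) ≤ (P ^ 2 / (4 * σ ^ 2)) / (2 * σ ^ 2) := by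
          apply div_le_div₀ (by positivity) hc1 (by positivity) (by linarith)
      _ = P ^ 2 / (8 * σ ^ 4) := by rw [div_div]; congr 1; ring
  have ha1 : a ≤ 1 := by
    rw [ha_eq, div_le_one (by positivity)]
    nlinarith [sq_nonneg (sw - σ), hsw2]
  have hbern : 1 - a ^ n ≤ (n:ℝ) * (1 - a) := by
    have h := one_add_mul_le_pow (show (-2:ℝ) ≤ a - 1 by linarith) n
    rw [show (1 + (a - 1)) = a by ring] at h
    nlinarith
  have hmul := mul_le_mul_of_nonneg_left h1a (Nat.cast_nonneg (α := ℝ) n)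
  calc Real.sqrt (1 - (s0 ^ n) ^ 2) = Real.sqrt (1 - a ^ n) := by
        rw [show (s0 ^ n) ^ 2 = (s0 ^ 2) ^ n by ring, hs0sq]
    _ ≤ Real.sqrt ((n:ℝ) * (P ^ 2 / (8 * σ ^ 4))) := Real.sqrt_le_sqrt (by linarith)
    _ = (P / (2 * σ ^ 2)) * Real.sqrt ((n:ℝ) / 2) := by
        rw [show (n:ℝ) * (P ^ 2 / (8 * σ ^ 4)) = (P / (2 * σ ^ 2)) ^ 2 * ((n:ℝ) / 2) by
            field_simp; ring,
          Real.sqrt_mul (sq_nonneg _), Real.sqrt_sq (by positivity)]
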